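/- Let c > 0, P₁ > 0, a, b ∈ ℝ with b > 0. Let X̃₁, X̃₂, Z, Z̃ be independent centered Gaussian random variables except that Z = (a/b)·Z̃ + N with N independent of Z̃; assume Var(X̃₁) = Var(X̃₂) = P₁, Var(Z) = 1, Var(Z̃) = b². Then Cov(X̃₁, c·X̃₁ + Z̃) = Cov(X̃₁, X̃₁ + c·X̃₂ + Z)·Var(X̃₁ + c·X̃₂ + Z)⁻¹·Cov(X̃₁ + c·X̃₂ + Z, c·X̃₁ + Z̃) if and only if c·(1 + c²·P₁) = a·b. -/

import Mathlib

open MeasureTheory ProbabilityTheory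

section myhelpers
open Real Set
open scoped NNReal ENNReal

lemma myint_sq_exp {β : ℝ} (hb : 0 < β) :
    ∫ x : ℝ, x ^ 2 * Real.exp (-β * x ^ 2) = Real.sqrt (π / β) / (2 * β) := by
  have h1 : ∫ x : ℝ, x ^ 2 * Real.exp (-β * x ^ 2)
      = 2 * ∫ x in Ioi (0:ℝ), x ^ 2 * Real.exp (-β * x ^ 2) := by
    rw [← integral_comp_abs (f := fun x => x ^ 2 * Real.exp (-β * x ^ 2))]
    simp [sq_abs]
  have h2 : ∫ x in Ioi (0:ℝ), x ^ 2 * Real.exp (-β * x ^ 2)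
      = β ^ (-(((2:ℝ) + 1)) / 2) * (1 / 2) * Real.Gamma (((2:ℝ) + 1) / 2) := by
    rw [← integral_rpow_mul_exp_neg_mul_rpow (by norm_num : (0:ℝ) < 2)
      (by norm_num : (-1:ℝ) < 2) hb]
    refine setIntegral_congr_fun measurableSet_Ioi (fun x hx => ?_)
    rw [← Real.rpow_natCast x 2]
    norm_num
  have hgamma : Real.Gamma (((2:ℝ) + 1) / 2) = Real.sqrt π / 2 := by
    have h12 : ((2:ℝ) + 1) / 2 = 1/2 + 1 := by norm_num
    rw [h12, Real.Gamma_add_one (by norm_num), Real.Gamma_one_half_eq]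
    ring
  rw [h1, h2, hgamma]
  have h3 : β ^ (-(((2:ℝ) + 1)) / 2) = (β * Real.sqrt β)⁻¹ := by
    rw [show (-(((2:ℝ) + 1)) / 2) = -(1 + 1/2) by norm_num, Real.rpow_neg hb.le,
      Real.rpow_add hb, Real.rpow_one, ← Real.sqrt_eq_rpow]
  rw [h3, Real.sqrt_div pi_pos.le]
  have hsb : Real.sqrt β ≠ 0 := (Real.sqrt_pos.mpr hb).ne'
  field_simp

lemma my_gauss_integral {v : ℝ≥0} (hv : v ≠ 0) (f : ℝ → ℝ) :
    ∫ x, f x ∂(gaussianReal 0 v) = ∫ x, gaussianPDFReal 0 v x * f x := by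
  rw [gaussianReal_of_var_ne_zero _ hv]
  have h : (gaussianPDF 0 v)
      = fun x => ((Real.toNNReal (gaussianPDFReal 0 v x) : ℝ≥0) : ℝ≥0∞) := rfl
  rw [h, integral_withDensity_eq_integral_smul
    ((measurable_gaussianPDFReal 0 v).real_toNNReal) f]
  congr 1; ext x
  rw [NNReal.smul_def, smul_eq_mul, Real.coe_toNNReal _ (gaussianPDFReal_nonneg 0 v x)]

lemma my_gauss_mean (v : ℝ≥0) : ∫ x, x ∂(gaussianReal 0 v) = 0 := by
  by_cases hv : v = 0
  · simp [hv]
  · rw [my_gauss_integral hv]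
    set g : ℝ → ℝ := fun x => gaussianPDFReal 0 v x * x with hg
    have hodd : ∀ x, g (-x) = - g x := by
      intro x
      simp only [hg, gaussianPDFReal]
      ring_nf
    have h := MeasureTheory.integral_neg_eq_self g (volume : Measure ℝ)
    simp_rw [hodd, integral_neg] at h
    linarith

lemma my_gauss_sq (v : ℝ≥0) : ∫ x, x ^ 2 ∂(gaussianReal 0 v) = v := by
  by_cases hv : v = 0
  · simp [hv]
  · rw [my_gauss_integral hv]
    have hvpos : (0:ℝ) < v := by positivity
    have hb : (0:ℝ) < (2 * (v:ℝ))⁻¹ := by positivity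
    have h : ∀ x : ℝ, gaussianPDFReal 0 v x * x ^ 2
        = (Real.sqrt (2 * π * v))⁻¹ * (x ^ 2 * Real.exp (-(2 * (v:ℝ))⁻¹ * x ^ 2)) := by
      intro x
      simp only [gaussianPDFReal, sub_zero]
      rw [show -x^2/(2*(v:ℝ)) = -(2 * (v:ℝ))⁻¹ * x^2 by field_simp]
      ring
    simp_rw [h]
    rw [integral_const_mul, myint_sq_exp hb]
    have h1 : π / (2 * (v:ℝ))⁻¹ = 2 * π * v := by field_simp
    have h2 : Real.sqrt (2 * π * (v:ℝ)) ≠ 0 := by positivity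
    rw [h1]
    field_simp

lemma my_memL2_gauss (v : ℝ≥0) : MemLp (id : ℝ → ℝ) 2 (gaussianReal 0 v) := by
  rw [memLp_two_iff_integrable_sq aestronglyMeasurable_id]
  by_cases hv : v = 0
  · simp only [hv, gaussianReal_zero_var]
    refine (integrable_const ((0:ℝ)^2)).congr ?_
    exact (ae_eq_dirac' ((measurable_id.pow_const 2))).symm
  · rw [gaussianReal_of_var_ne_zero _ hv]
    rw [integrable_withDensity_iff (measurable_gaussianPDF 0 v)
      (ae_of_all _ (fun x => ENNReal.ofReal_lt_top))]
    have hvpos : (0:ℝ) < v := by positivity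
    have hb : (0:ℝ) < (2 * (v:ℝ))⁻¹ := by positivity
    have h : ∀ x : ℝ, (x:ℝ) ^ 2 * (gaussianPDF 0 v x).toReal
        = (Real.sqrt (2 * π * v))⁻¹ * (x ^ 2 * Real.exp (-(2 * (v:ℝ))⁻¹ * x ^ 2)) := by
      intro x
      rw [gaussianPDF, ENNReal.toReal_ofReal (gaussianPDFReal_nonneg 0 v x)]
      simp only [gaussianPDFReal, sub_zero]
      rw [show -x^2/(2*(v:ℝ)) = -(2 * (v:ℝ))⁻¹ * x^2 by field_simp]
      ring
    simp only [id_eq]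
    simp_rw [h]
    refine Integrable.const_mul ?_ _
    have := integrable_rpow_mul_exp_neg_mul_sq hb (by norm_num : (-1:ℝ) < 2)
    simp only [Real.rpow_two] at this
    exact this

lemma my_integrable_mul {Ω : Type*} [MeasurableSpace Ω] {μ : Measure Ω}
    {f g : Ω → ℝ} (hf : MemLp f 2 μ) (hg : MemLp g 2 μ) :
    Integrable (fun ω => f ω * g ω) μ := by
  have h := hf.integrable_sq.add hg.integrable_sq
  refine h.mono' (hf.1.mul hg.1) ?_
  filter_upwards with ω
  have h1 := sq_nonneg (|f ω| - |g ω|)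
  have h2 := sq_abs (f ω)
  have h3 := sq_abs (g ω)
  rw [Real.norm_eq_abs, abs_mul]
  simp only [Pi.add_apply]
  nlinarith [abs_nonneg (f ω), abs_nonneg (g ω)]

lemma my_integral_add3 {Ω : Type*} [MeasurableSpace Ω] {μ : Measure Ω} {f1 f2 f3 : Ω → ℝ}
    (h1 : Integrable f1 μ) (h2 : Integrable f2 μ) (h3 : Integrable f3 μ) :
    ∫ ω, (f1 ω + f2 ω + f3 ω) ∂μ = (∫ ω, f1 ω ∂μ) + (∫ ω, f2 ω ∂μ) + (∫ ω, f3 ω ∂μ) := by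
  have i12 : Integrable (fun ω => f1 ω + f2 ω) μ := by exact h1.add h2
  rw [integral_add i12 h3, integral_add h1 h2]

lemma my_integral_add6 {Ω : Type*} [MeasurableSpace Ω] {μ : Measure Ω} {f1 f2 f3 f4 f5 f6 : Ω → ℝ}
    (h1 : Integrable f1 μ) (h2 : Integrable f2 μ) (h3 : Integrable f3 μ)
    (h4 : Integrable f4 μ) (h5 : Integrable f5 μ) (h6 : Integrable f6 μ) :
    ∫ ω, (f1 ω + f2 ω + f3 ω + f4 ω + f5 ω + f6 ω) ∂μ
      = (∫ ω, f1 ω ∂μ) + (∫ ω, f2 ω ∂μ) + (∫ ω, f3 ω ∂μ) + (∫ ω, f4 ω ∂μ)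
        + (∫ ω, f5 ω ∂μ) + (∫ ω, f6 ω ∂μ) := by
  have i3 : Integrable (fun ω => f1 ω + f2 ω + f3 ω) μ := by exact (h1.add h2).add h3
  have i4 : Integrable (fun ω => f1 ω + f2 ω + f3 ω + f4 ω) μ := by exact i3.add h4
  have i5 : Integrable (fun ω => f1 ω + f2 ω + f3 ω + f4 ω + f5 ω) μ := by exact i4.add h5
  rw [integral_add i5 h6, integral_add i4 h5, integral_add i3 h4, my_integral_add3 h1 h2 h3]

end myhelpers

/-- Covariance of two real random variables. -/
noncomputable def cov {Ω : Type*} [MeasurableSpace Ω] (μ : Measure Ω) (X Y : Ω → ℝ) : ℝ :=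
  ∫ ω, (X ω - ∫ x, X x ∂μ) * (Y ω - ∫ x, Y x ∂μ) ∂μ

/-- Variance of a real random variable. -/
noncomputable def var' {Ω : Type*} [MeasurableSpace Ω] (μ : Measure Ω) (X : Ω → ℝ) : ℝ :=
  ∫ ω, (X ω - ∫ x, X x ∂μ) ^ 2 ∂μ

lemma my_cov_eq {Ω : Type*} [MeasurableSpace Ω] {μ : Measure Ω} [IsProbabilityMeasure μ]
    {f g : Ω → ℝ} (hf : MemLp f 2 μ) (hg : MemLp g 2 μ) :
    cov μ f g = (∫ ω, f ω * g ω ∂μ) - (∫ ω, f ω ∂μ) * (∫ ω, g ω ∂μ) := by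
  have hif : Integrable f μ := hf.integrable one_le_two
  have hig : Integrable g μ := hg.integrable one_le_two
  have hifg := my_integrable_mul hf hg
  unfold cov
  have hexp : ∀ ω, (f ω - ∫ x, f x ∂μ) * (g ω - ∫ x, g x ∂μ)
      = f ω * g ω - (∫ x, f x ∂μ) * g ω - (∫ x, g x ∂μ) * f ω
        + (∫ x, f x ∂μ) * (∫ x, g x ∂μ) := fun ω => by ring
  simp_rw [hexp]
  have i1 : Integrable (fun ω => f ω * g ω - (∫ x, f x ∂μ) * g ω) μ := by
    exact hifg.sub (hig.const_mul _)
  have i2 : Integrable (fun ω => f ω * g ω - (∫ x, f x ∂μ) * g ω - (∫ x, g x ∂μ) * f ω) μ := by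
    exact i1.sub (hif.const_mul _)
  rw [integral_add i2 (integrable_const _),
    integral_sub i1 (hif.const_mul _),
    integral_sub hifg (hig.const_mul _),
    integral_const_mul, integral_const_mul, integral_const]
  simp only [probReal_univ, smul_eq_mul, one_mul]
  ring

lemma my_var_eq {Ω : Type*} [MeasurableSpace Ω] {μ : Measure Ω} [IsProbabilityMeasure μ]
    {f : Ω → ℝ} (hf : MemLp f 2 μ) :
    var' μ f = (∫ ω, f ω * f ω ∂μ) - (∫ ω, f ω ∂μ) * (∫ ω, f ω ∂μ) := by
  rw [← my_cov_eq hf hf]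
  unfold var' cov
  simp_rw [pow_two]

theorem markov_chain_iff_smart_genie
    {Ω : Type*} [MeasurableSpace Ω] (μ : Measure Ω) [IsProbabilityMeasure μ]
    (c P₁ a b vN : ℝ) (hc : 0 < c) (hP₁ : 0 < P₁) (hb : 0 < b)
    (X1 X2 Zt N : Ω → ℝ)
    (hindep : iIndepFun ![X1, X2, Zt, N] μ)
    (hX1 : Measure.map X1 μ = gaussianReal 0 P₁.toNNReal)
    (hX2 : Measure.map X2 μ = gaussianReal 0 P₁.toNNReal)
    (hZt : Measure.map Zt μ = gaussianReal 0 (b ^ 2).toNNReal)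
    (hN : Measure.map N μ = gaussianReal 0 vN.toNNReal)
    (Z : Ω → ℝ) (hZ : Z = fun ω => (a / b) * Zt ω + N ω)
    (hZvar : var' μ Z = 1) :
    (cov μ X1 (fun ω => c * X1 ω + Zt ω) =
      cov μ X1 (fun ω => X1 ω + c * X2 ω + Z ω) *
        (var' μ (fun ω => X1 ω + c * X2 ω + Z ω))⁻¹ *
        cov μ (fun ω => X1 ω + c * X2 ω + Z ω) (fun ω => c * X1 ω + Zt ω)) ↔
    c * (1 + c ^ 2 * P₁) = a * b := by
  -- measurability
  have hX1m : AEMeasurable X1 μ := aemeasurable_of_map_neZero (by rw [hX1]; infer_instance)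
  have hX2m : AEMeasurable X2 μ := aemeasurable_of_map_neZero (by rw [hX2]; infer_instance)
  have hZtm : AEMeasurable Zt μ := aemeasurable_of_map_neZero (by rw [hZt]; infer_instance)
  have hNm : AEMeasurable N μ := aemeasurable_of_map_neZero (by rw [hN]; infer_instance)
  -- L2 membership
  have hl2 : ∀ (X : Ω → ℝ) (v : NNReal), AEMeasurable X μ →
      Measure.map X μ = gaussianReal 0 v → MemLp X 2 μ := by
    intro X v hXm hmap
    have h := my_memL2_gauss v
    rw [← hmap] at h
    exact (memLp_map_measure_iff aestronglyMeasurable_id hXm).1 h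
  have hX1_2 := hl2 X1 _ hX1m hX1
  have hX2_2 := hl2 X2 _ hX2m hX2
  have hZt_2 := hl2 Zt _ hZtm hZt
  have hN_2 := hl2 N _ hNm hN
  have hZ_2 : MemLp Z 2 μ := by rw [hZ]; exact (hZt_2.const_mul (a/b)).add hN_2
  -- means are zero
  have hmean : ∀ (X : Ω → ℝ) (v : NNReal), AEMeasurable X μ →
      Measure.map X μ = gaussianReal 0 v → ∫ ω, X ω ∂μ = 0 := by
    intro X v hXm hmap
    have h := integral_map (f := fun x : ℝ => x) hXm aestronglyMeasurable_id
    rw [hmap, my_gauss_mean v] at h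
    exact h.symm
  have hE1 := hmean X1 _ hX1m hX1
  have hE2 := hmean X2 _ hX2m hX2
  have hEZt := hmean Zt _ hZtm hZt
  have hEN := hmean N _ hNm hN
  -- second moments
  have hsq : ∀ (X : Ω → ℝ) (v : NNReal), AEMeasurable X μ →
      Measure.map X μ = gaussianReal 0 v → ∫ ω, X ω * X ω ∂μ = v := by
    intro X v hXm hmap
    have h := integral_map (f := fun x : ℝ => x ^ 2) hXm
      (measurable_id.pow_const 2).aestronglyMeasurable
    rw [hmap, my_gauss_sq v] at h
    calc ∫ ω, X ω * X ω ∂μ = ∫ ω, X ω ^ 2 ∂μ := by simp_rw [pow_two]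
    _ = v := h.symm
  have eX1X1 : ∫ ω, X1 ω * X1 ω ∂μ = P₁ :=
    (hsq X1 _ hX1m hX1).trans (Real.coe_toNNReal _ hP₁.le)
  have eX2X2 : ∫ ω, X2 ω * X2 ω ∂μ = P₁ :=
    (hsq X2 _ hX2m hX2).trans (Real.coe_toNNReal _ hP₁.le)
  have eZtZt : ∫ ω, Zt ω * Zt ω ∂μ = b ^ 2 :=
    (hsq Zt _ hZtm hZt).trans (Real.coe_toNNReal _ (sq_nonneg b))
  -- independence of pairs
  have hI : ∀ i j : Fin 4, i ≠ j →
      IndepFun (![X1, X2, Zt, N] i) (![X1, X2, Zt, N] j) μ :=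
    fun i j hij => hindep.indepFun hij
  have h01 : IndepFun X1 X2 μ := by have := hI 0 1 (by decide); simpa using this
  have h02 : IndepFun X1 Zt μ := by have := hI 0 2 (by decide); simpa using this
  have h03 : IndepFun X1 N μ := by have := hI 0 3 (by decide); simpa using this
  have h12 : IndepFun X2 Zt μ := by have := hI 1 2 (by decide); simpa using this
  have h13 : IndepFun X2 N μ := by have := hI 1 3 (by decide); simpa using this
  have h23 : IndepFun Zt N μ := by have := hI 2 3 (by decide); simpa using this
  have hzero : ∀ (U V : Ω → ℝ), IndepFun U V μ → MemLp U 2 μ → MemLp V 2 μ →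
      (∫ ω, U ω ∂μ) = 0 → ∫ ω, U ω * V ω ∂μ = 0 := by
    intro U V hUV hU hV hEU
    have h := hUV.integral_mul_eq_mul_integral hU.aestronglyMeasurable hV.aestronglyMeasurable
    rw [show (U * V) = fun ω => U ω * V ω from rfl] at h
    rw [h, hEU, zero_mul]
  have eX1X2 := hzero X1 X2 h01 hX1_2 hX2_2 hE1
  have eX1Zt := hzero X1 Zt h02 hX1_2 hZt_2 hE1
  have eX1N := hzero X1 N h03 hX1_2 hN_2 hE1
  have eX2Zt := hzero X2 Zt h12 hX2_2 hZt_2 hE2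
  have eX2N := hzero X2 N h13 hX2_2 hN_2 hE2
  have eNZt := hzero N Zt h23.symm hN_2 hZt_2 hEN
  -- integrability of products
  have iX1X1 := my_integrable_mul hX1_2 hX1_2
  have iX2X2 := my_integrable_mul hX2_2 hX2_2
  have iX1X2 := my_integrable_mul hX1_2 hX2_2
  have iX1Zt := my_integrable_mul hX1_2 hZt_2
  have iX1N := my_integrable_mul hX1_2 hN_2
  have iX2Zt := my_integrable_mul hX2_2 hZt_2
  have iX2N := my_integrable_mul hX2_2 hN_2
  have iZtZt := my_integrable_mul hZt_2 hZt_2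
  have iNZt := my_integrable_mul hN_2 hZt_2
  have iX1Z := my_integrable_mul hX1_2 hZ_2
  have iX2Z := my_integrable_mul hX2_2 hZ_2
  have iZZ := my_integrable_mul hZ_2 hZ_2
  have iZt := hZt_2.integrable one_le_two
  have iN := hN_2.integrable one_le_two
  have iX1 := hX1_2.integrable one_le_two
  have iX2 := hX2_2.integrable one_le_two
  have iZ := hZ_2.integrable one_le_two
  -- moments involving Z
  have hEZ : ∫ ω, Z ω ∂μ = 0 := by
    rw [hZ]
    rw [integral_add (by exact iZt.const_mul (a/b)) iN, integral_const_mul, hEZt, hEN]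
    ring
  have eX1Z : ∫ ω, X1 ω * Z ω ∂μ = 0 := by
    simp only [hZ]
    have hexp : ∀ ω, X1 ω * ((a / b) * Zt ω + N ω)
        = (a / b) * (X1 ω * Zt ω) + X1 ω * N ω := fun ω => by ring
    simp_rw [hexp]
    rw [integral_add (by exact iX1Zt.const_mul (a/b)) iX1N, integral_const_mul, eX1Zt, eX1N]
    ring
  have eX2Z : ∫ ω, X2 ω * Z ω ∂μ = 0 := by
    simp only [hZ]
    have hexp : ∀ ω, X2 ω * ((a / b) * Zt ω + N ω)
        = (a / b) * (X2 ω * Zt ω) + X2 ω * N ω := fun ω => by ring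
    simp_rw [hexp]
    rw [integral_add (by exact iX2Zt.const_mul (a/b)) iX2N, integral_const_mul, eX2Zt, eX2N]
    ring
  have eZZt : ∫ ω, Z ω * Zt ω ∂μ = a * b := by
    simp only [hZ]
    have hexp : ∀ ω, ((a / b) * Zt ω + N ω) * Zt ω
        = (a / b) * (Zt ω * Zt ω) + N ω * Zt ω := fun ω => by ring
    simp_rw [hexp]
    rw [integral_add (by exact iZtZt.const_mul (a/b)) iNZt, integral_const_mul, eZtZt, eNZt]
    field_simp
    ring
  have eZZ : ∫ ω, Z ω * Z ω ∂μ = 1 := by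
    have h := my_var_eq hZ_2
    rw [hZvar, hEZ] at h
    linarith
  -- L2 membership of the composite variables
  have hW2 : MemLp (fun ω => c * X1 ω + Zt ω) 2 μ := by
    exact (hX1_2.const_mul c).add hZt_2
  have hY2 : MemLp (fun ω => X1 ω + c * X2 ω + Z ω) 2 μ := by
    exact (hX1_2.add (hX2_2.const_mul c)).add hZ_2
  -- means of composites
  have hEW : ∫ ω, (c * X1 ω + Zt ω) ∂μ = 0 := by
    rw [integral_add (by exact iX1.const_mul c) iZt, integral_const_mul, hE1, hEZt]
    ring
  have hEY : ∫ ω, (X1 ω + c * X2 ω + Z ω) ∂μ = 0 := by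
    rw [my_integral_add3 iX1 (by exact iX2.const_mul c) iZ, integral_const_mul, hE1, hE2, hEZ]
    ring
  -- the four moment quantities
  have A1 : ∫ ω, X1 ω * (c * X1 ω + Zt ω) ∂μ = c * P₁ := by
    have hexp : ∀ ω, X1 ω * (c * X1 ω + Zt ω)
        = c * (X1 ω * X1 ω) + X1 ω * Zt ω := fun ω => by ring
    simp_rw [hexp]
    rw [integral_add (by exact iX1X1.const_mul c) iX1Zt, integral_const_mul, eX1X1, eX1Zt]
    ring
  have A2 : ∫ ω, X1 ω * (X1 ω + c * X2 ω + Z ω) ∂μ = P₁ := by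
    have hexp : ∀ ω, X1 ω * (X1 ω + c * X2 ω + Z ω)
        = X1 ω * X1 ω + c * (X1 ω * X2 ω) + X1 ω * Z ω := fun ω => by ring
    simp_rw [hexp]
    rw [my_integral_add3 iX1X1 (by exact iX1X2.const_mul c) iX1Z,
      integral_const_mul, eX1X1, eX1X2, eX1Z]
    ring
  have A3 : ∫ ω, (X1 ω + c * X2 ω + Z ω) * (X1 ω + c * X2 ω + Z ω) ∂μ
      = P₁ + c ^ 2 * P₁ + 1 := by
    have hexp : ∀ ω, (X1 ω + c * X2 ω + Z ω) * (X1 ω + c * X2 ω + Z ω)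
        = X1 ω * X1 ω + (c * c) * (X2 ω * X2 ω) + Z ω * Z ω + (2 * c) * (X1 ω * X2 ω)
          + 2 * (X1 ω * Z ω) + (2 * c) * (X2 ω * Z ω) := fun ω => by ring
    simp_rw [hexp]
    rw [my_integral_add6 iX1X1 (by exact iX2X2.const_mul (c*c)) iZZ
      (by exact iX1X2.const_mul (2*c)) (by exact iX1Z.const_mul 2)
      (by exact iX2Z.const_mul (2*c)),
      integral_const_mul, integral_const_mul, integral_const_mul, integral_const_mul,
      eX1X1, eX2X2, eZZ, eX1X2, eX1Z, eX2Z]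
    ring
  have A4 : ∫ ω, (X1 ω + c * X2 ω + Z ω) * (c * X1 ω + Zt ω) ∂μ = c * P₁ + a * b := by
    have hexp : ∀ ω, (X1 ω + c * X2 ω + Z ω) * (c * X1 ω + Zt ω)
        = c * (X1 ω * X1 ω) + X1 ω * Zt ω + (c * c) * (X1 ω * X2 ω)
          + c * (X2 ω * Zt ω) + c * (X1 ω * Z ω) + Z ω * Zt ω := fun ω => by ring
    simp_rw [hexp]
    rw [my_integral_add6 (by exact iX1X1.const_mul c) iX1Zt
      (by exact iX1X2.const_mul (c*c)) (by exact iX2Zt.const_mul c)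
      (by exact iX1Z.const_mul c) (my_integrable_mul hZ_2 hZt_2),
      integral_const_mul, integral_const_mul, integral_const_mul, integral_const_mul,
      eX1X1, eX1Zt, eX1X2, eX2Zt, eX1Z, eZZt]
    ring
  -- the four cov / var values
  have q1 : cov μ X1 (fun ω => c * X1 ω + Zt ω) = c * P₁ := by
    rw [my_cov_eq hX1_2 hW2, A1, hE1, hEW]
    ring
  have q2 : cov μ X1 (fun ω => X1 ω + c * X2 ω + Z ω) = P₁ := by
    rw [my_cov_eq hX1_2 hY2, A2, hE1, hEY]
    ring
  have q3 : var' μ (fun ω => X1 ω + c * X2 ω + Z ω) = P₁ + c ^ 2 * P₁ + 1 := by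
    rw [my_var_eq hY2, A3, hEY]
    ring
  have q4 : cov μ (fun ω => X1 ω + c * X2 ω + Z ω) (fun ω => c * X1 ω + Zt ω)
      = c * P₁ + a * b := by
    rw [my_cov_eq hY2 hW2, A4, hEY, hEW]
    ring
  rw [q1, q2, q3, q4]
  have hD : (0:ℝ) < P₁ + c ^ 2 * P₁ + 1 := by positivity
  have hre : P₁ * (P₁ + c ^ 2 * P₁ + 1)⁻¹ * (c * P₁ + a * b)
      = P₁ * (c * P₁ + a * b) / (P₁ + c ^ 2 * P₁ + 1) := by ring
  rw [hre, eq_div_iff hD.ne']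
  constructor
  · intro h
    have h2 : P₁ * (c * (1 + c ^ 2 * P₁) - a * b) = 0 := by linear_combination h
    rcases mul_eq_zero.mp h2 with h3 | h3
    · exact absurd h3 hP₁.ne'
    · linarith
  · intro h
    linear_combination P₁ * h
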